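/- If P is a complex polynomial of degree n having no zeros in the open unit disk, then for every R > 1, the maximum of |P(Rz)| over |z|=1 is at most ((R^n+1)/2) times the maximum of |P(z)| over |z|=1. -/

import Mathlib

open Polynomial Metric Set

noncomputable def maxSphere (P : Polynomial ℂ) : ℝ :=
  sSup ((fun w => ‖P.eval w‖) '' sphere (0:ℂ) 1)

noncomputable def minSphere (P : Polynomial ℂ) : ℝ :=
  sInf ((fun w => ‖P.eval w‖) '' sphere (0:ℂ) 1)

open ComplexConjugate Finset Filter

noncomputable def Qp (n : ℕ) (p : Polynomial ℂ) : Polynomial ℂ :=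
  ∑ i ∈ Finset.range (n+1), Polynomial.C (conj (p.coeff i)) * Polynomial.X ^ (n - i)

lemma Qp_eval (n : ℕ) (p : Polynomial ℂ) (w : ℂ) :
    (Qp n p).eval w = ∑ i ∈ Finset.range (n+1), conj (p.coeff i) * w ^ (n - i) := by
  simp [Qp, Polynomial.eval_finset_sum]

lemma eval_sum_range {n : ℕ} (p : Polynomial ℂ) (h : p.natDegree ≤ n) (w : ℂ) :
    p.eval w = ∑ i ∈ Finset.range (n+1), p.coeff i * w ^ i :=
  Polynomial.eval_eq_sum_range' (Nat.lt_succ_of_le h) w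

-- R' : Qp eval in terms of p
lemma Qp_eval_eq (n : ℕ) (p : Polynomial ℂ) (h : p.natDegree ≤ n) {w : ℂ} (hw : w ≠ 0) :
    (Qp n p).eval w = w ^ n * conj (p.eval ((conj w)⁻¹)) := by
  rw [Qp_eval, eval_sum_range p h, map_sum, Finset.mul_sum]
  refine Finset.sum_congr rfl fun i hi => ?_
  rw [Finset.mem_range] at hi
  have hi' : i ≤ n := Nat.lt_succ_iff.mp hi
  rw [map_mul, map_pow, map_inv₀, Complex.conj_conj]
  have : (w:ℂ) ^ n = w ^ (n - i) * w ^ i := by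
    rw [← pow_add]; congr 1; omega
  rw [this]
  field_simp
  rw [mul_assoc, ← mul_pow, mul_one_div_cancel hw, one_pow, mul_one]

-- R : p eval in terms of Qp
lemma eval_eq_Qp (n : ℕ) (p : Polynomial ℂ) (h : p.natDegree ≤ n) {w : ℂ} (hw : w ≠ 0) :
    p.eval w = w ^ n * conj ((Qp n p).eval ((conj w)⁻¹)) := by
  have hw' : (conj w)⁻¹ ≠ 0 := by simp [hw]
  rw [Qp_eval, map_sum, eval_sum_range p h, Finset.mul_sum]
  refine Finset.sum_congr rfl fun i hi => ?_
  rw [Finset.mem_range] at hi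
  have hi' : i ≤ n := Nat.lt_succ_iff.mp hi
  rw [map_mul, Complex.conj_conj, map_pow, map_inv₀, Complex.conj_conj]
  have : (w:ℂ) ^ n = w ^ (n - i) * w ^ i := by
    rw [← pow_add]; congr 1; omega
  rw [this]
  field_simp
  rw [mul_assoc, ← mul_pow, mul_one_div_cancel hw, one_pow, mul_one]

lemma contAbs (P : Polynomial ℂ) : Continuous (fun w => ‖P.eval w‖) :=
  continuous_norm.comp P.continuous

lemma bdd (P : Polynomial ℂ) : BddAbove ((fun w => ‖P.eval w‖) '' sphere (0:ℂ) 1) :=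
  (isCompact_sphere 0 1).bddAbove_image (contAbs P).continuousOn

lemma sphere_le (P : Polynomial ℂ) {z : ℂ} (hz : ‖z‖ = 1) :
    ‖P.eval z‖ ≤ maxSphere P := by
  apply le_csSup (bdd P)
  exact ⟨z, by simpa using hz, rfl⟩

lemma maxSphere_nonneg (P : Polynomial ℂ) : 0 ≤ maxSphere P :=
  le_trans (norm_nonneg _) (sphere_le P norm_one)

lemma ball_le (P : Polynomial ℂ) {z : ℂ} (hz : ‖z‖ ≤ 1) :
    ‖P.eval z‖ ≤ maxSphere P := by
  have := Complex.norm_le_of_forall_mem_frontier_norm_le (isBounded_ball (x := (0:ℂ)) (r := 1))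
    (P.differentiable.diffContOnCl) (f := fun z => P.eval z) (C := maxSphere P) ?_ (z := z) ?_
  · simpa using this
  · intro w hw
    rw [frontier_ball (0:ℂ) one_ne_zero] at hw
    simp only [mem_sphere_iff_norm, sub_zero] at hw
    simpa using sphere_le P hw
  · rw [closure_ball (0:ℂ) one_ne_zero]
    simpa using hz

lemma inv_conj_self {u : ℂ} (hu : ‖u‖ = 1) : (conj u)⁻¹ = u := by
  have h0 : u ≠ 0 := by intro h; simp [h] at hu
  have : conj u * u = 1 := by
    rw [mul_comm, Complex.mul_conj]
    norm_cast
    simp [Complex.normSq_eq_norm_sq, hu]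
  exact inv_eq_of_mul_eq_one_right this

lemma abs_eq_on_sphere (n : ℕ) (p : Polynomial ℂ) (h : p.natDegree ≤ n) {u : ℂ}
    (hu : ‖u‖ = 1) : ‖(Qp n p).eval u‖ = ‖p.eval u‖ := by
  have h0 : u ≠ 0 := by intro h; simp [h] at hu
  rw [eval_eq_Qp n p h h0, inv_conj_self hu]
  simp [norm_mul, norm_pow, Complex.norm_conj, hu]

lemma maxmod_inner (n : ℕ) (F : Polynomial ℂ) (h : F.natDegree ≤ n)
    (hF : ∀ z : ℂ, ‖z‖ ≤ 1 → F.eval z ≠ 0) {u : ℂ} (hu : ‖u‖ ≤ 1) :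
    ‖(Qp n F).eval u‖ ≤ ‖F.eval u‖ := by
  set f : ℂ → ℂ := fun z => (Qp n F).eval z / F.eval z
  have hcl : closure (ball (0:ℂ) 1) = closedBall 0 1 := closure_ball (0:ℂ) one_ne_zero
  have hmem : ∀ z : ℂ, z ∈ closedBall (0:ℂ) 1 → ‖z‖ ≤ 1 := by
    intro z hz; simpa using mem_closedBall_zero_iff.mp hz
  have hdc : DiffContOnCl ℂ f (ball (0:ℂ) 1) := by
    constructor
    · exact ((Qp n F).differentiable.differentiableOn).div
        (F.differentiable.differentiableOn)
        (fun z hz => hF z (le_of_lt (by simpa using mem_ball_zero_iff.mp hz)))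
    · rw [hcl]
      exact ((Qp n F).continuous.continuousOn).div (F.continuous.continuousOn)
        (fun z hz => hF z (hmem z hz))
  have key : ‖f u‖ ≤ 1 := by
    refine Complex.norm_le_of_forall_mem_frontier_norm_le (isBounded_ball) hdc ?_ ?_
    · intro z hz
      rw [frontier_ball (0:ℂ) one_ne_zero] at hz
      have hz1 : ‖z‖ = 1 := by
        simpa using mem_sphere_zero_iff_norm.mp hz
      have := abs_eq_on_sphere n F h hz1
      simp only [f, norm_div, this]
      exact div_self_le_one _
    · rw [hcl]; simpa using hu
  have hFu : F.eval u ≠ 0 := hF u hu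
  have : ‖(Qp n F).eval u‖ / ‖F.eval u‖ ≤ 1 := by
    simpa [f, norm_div] using key
  calc ‖(Qp n F).eval u‖
      = ‖(Qp n F).eval u‖ / ‖F.eval u‖ * ‖F.eval u‖ := by
        rw [div_mul_cancel₀ _ (norm_ne_zero_iff.mpr hFu)]
    _ ≤ 1 * ‖F.eval u‖ := by
        exact mul_le_mul_of_nonneg_right this (norm_nonneg _)
    _ = _ := one_mul _

lemma maxmod_outer (n : ℕ) (F : Polynomial ℂ) (h : F.natDegree ≤ n)
    (hF : ∀ z : ℂ, ‖z‖ ≤ 1 → F.eval z ≠ 0) {w : ℂ} (hw : 1 ≤ ‖w‖) :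
    ‖F.eval w‖ ≤ ‖(Qp n F).eval w‖ := by
  have h0 : w ≠ 0 := by intro h; simp [h] at hw; linarith
  have hu : ‖(conj w)⁻¹‖ ≤ 1 := by
    rw [norm_inv, Complex.norm_conj]
    exact inv_le_one_of_one_le₀ hw
  have hu0 : (conj w)⁻¹ ≠ 0 := by simp [h0]
  calc ‖F.eval w‖
      = ‖w‖ ^ n * ‖(Qp n F).eval ((conj w)⁻¹)‖ := by
        rw [eval_eq_Qp n F h h0]; simp [norm_mul, norm_pow]
    _ ≤ ‖w‖ ^ n * ‖F.eval ((conj w)⁻¹)‖ := by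
        exact mul_le_mul_of_nonneg_left (maxmod_inner n F h hF hu) (by positivity)
    _ = ‖(Qp n F).eval w‖ := by
        rw [Qp_eval_eq n F h h0]; simp [norm_mul, norm_pow]

noncomputable def Pr (n : ℕ) (P : Polynomial ℂ) (r : ℝ) : Polynomial ℂ :=
  ∑ i ∈ Finset.range (n+1), Polynomial.C (P.coeff i * (r:ℂ)^i) * Polynomial.X ^ i

lemma Pr_coeff (n : ℕ) (P : Polynomial ℂ) (r : ℝ) {i : ℕ} (hi : i ∈ Finset.range (n+1)) :
    (Pr n P r).coeff i = P.coeff i * (r:ℂ)^i := by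
  rw [Pr, Polynomial.finset_sum_coeff]
  rw [Finset.sum_eq_single i]
  · rw [Polynomial.coeff_C_mul, Polynomial.coeff_X_pow, if_pos rfl, mul_one]
  · intro j hj hne
    rw [Polynomial.coeff_C_mul, Polynomial.coeff_X_pow, if_neg (Ne.symm hne), mul_zero]
  · intro h; exact absurd hi h

lemma Pr_natDegree (n : ℕ) (P : Polynomial ℂ) (r : ℝ) : (Pr n P r).natDegree ≤ n := by
  refine Polynomial.natDegree_sum_le_of_forall_le _ _ fun i hi => ?_
  exact le_trans (Polynomial.natDegree_C_mul_X_pow_le _ _) (Nat.lt_succ_iff.mp (Finset.mem_range.mp hi))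

lemma Pr_eval (n : ℕ) (P : Polynomial ℂ) (h : P.natDegree ≤ n) (r : ℝ) (z : ℂ) :
    (Pr n P r).eval z = P.eval ((r:ℂ) * z) := by
  rw [Pr, Polynomial.eval_finset_sum, eval_sum_range P h ((r:ℂ)*z)]
  refine Finset.sum_congr rfl fun i hi => ?_
  simp [mul_pow]; ring

lemma P_le_Q (n : ℕ) (P : Polynomial ℂ) (h : P.natDegree ≤ n)
    (hz : ∀ z : ℂ, ‖z‖ < 1 → P.eval z ≠ 0) {w : ℂ} (hw : 1 ≤ ‖w‖) :
    ‖P.eval w‖ ≤ ‖(Qp n P).eval w‖ := by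
  have hg_eq : ∀ r : ℝ,
      ‖∑ i ∈ Finset.range (n+1), conj (P.coeff i) * (r:ℂ)^i * w ^ (n - i)‖
        = ‖(Qp n (Pr n P r)).eval w‖ := by
    intro r
    rw [Qp_eval]
    congr 1
    refine Finset.sum_congr rfl fun i hi => ?_
    rw [Pr_coeff n P r hi, map_mul, map_pow, Complex.conj_ofReal]
  have hle : ∀ r ∈ Ioo (0:ℝ) 1, ‖P.eval ((r:ℂ) * w)‖ ≤
      ‖∑ i ∈ Finset.range (n+1), conj (P.coeff i) * (r:ℂ)^i * w ^ (n - i)‖ := by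
    intro r hr
    rw [hg_eq]
    have := maxmod_outer n (Pr n P r) (Pr_natDegree n P r) ?_ hw
    · simpa [Pr_eval n P h] using this
    · intro z hz1
      rw [Pr_eval n P h]
      apply hz
      rw [norm_mul, Complex.norm_real, Real.norm_eq_abs, abs_of_pos hr.1]
      calc r * ‖z‖ ≤ r * 1 := by
            exact mul_le_mul_of_nonneg_left hz1 (le_of_lt hr.1)
        _ < 1 := by simpa using hr.2
  have hf : Tendsto (fun r : ℝ => ‖P.eval ((r:ℂ) * w)‖)
      (nhdsWithin (1:ℝ) (Set.Iio (1:ℝ))) (nhds (‖P.eval (((1:ℝ):ℂ) * w)‖)) := by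
    apply Tendsto.mono_left _ nhdsWithin_le_nhds
    exact ((continuous_norm.comp
      (P.continuous.comp (Complex.continuous_ofReal.mul continuous_const))).tendsto 1)
  have hg : Tendsto (fun r : ℝ =>
        ‖∑ i ∈ Finset.range (n+1), conj (P.coeff i) * (r:ℂ)^i * w ^ (n - i)‖)
      (nhdsWithin (1:ℝ) (Set.Iio (1:ℝ)))
      (nhds (‖∑ i ∈ Finset.range (n+1),
        conj (P.coeff i) * ((1:ℝ):ℂ)^i * w ^ (n - i)‖)) := by
    apply Tendsto.mono_left _ nhdsWithin_le_nhds
    refine ((continuous_norm.comp ?_).tendsto (1:ℝ))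
    exact continuous_finset_sum _ fun i _ =>
      (continuous_const.mul (Complex.continuous_ofReal.pow i)).mul continuous_const
  have hev : ∀ᶠ (r : ℝ) in nhdsWithin (1:ℝ) (Set.Iio (1:ℝ)),
      ‖P.eval ((r:ℂ) * w)‖ ≤
      ‖∑ i ∈ Finset.range (n+1), conj (P.coeff i) * (r:ℂ)^i * w ^ (n - i)‖ := by
    filter_upwards [Ioo_mem_nhdsLT_of_mem (show (1:ℝ) ∈ Ioc (0:ℝ) 1 by constructor <;> norm_num)]
      with r hr using hle r hr
  have hfin := le_of_tendsto_of_tendsto hf hg hev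
  have hf1 : ‖P.eval (((1:ℝ):ℂ) * w)‖ = ‖P.eval w‖ := by norm_num
  have hg1 : ‖∑ i ∈ Finset.range (n+1),
      conj (P.coeff i) * ((1:ℝ):ℂ)^i * w ^ (n - i)‖ = ‖(Qp n P).eval w‖ := by
    rw [Qp_eval]
    congr 1
    refine Finset.sum_congr rfl fun i hi => ?_
    norm_num
  rwa [hf1, hg1] at hfin

lemma sum_key (n : ℕ) (P : Polynomial ℂ) (h : P.natDegree ≤ n) (hM : 0 < maxSphere P)
    {w : ℂ} {R : ℝ} (habs : ‖w‖ = R) (hR : 1 < R) :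
    ‖P.eval w‖ + ‖(Qp n P).eval w‖
      ≤ maxSphere P * (R ^ n + 1) := by
  set M := maxSphere P with hMdef
  have hw0 : w ≠ 0 := by
    intro h0; rw [h0] at habs; simp at habs; rw [← habs] at hR; norm_num at hR
  have hRpos : (0:ℝ) < R := lt_trans one_pos hR
  set q : ℂ := (Qp n P).eval w with hq
  -- |q| ≤ M * R^n
  have hqb : ‖q‖ ≤ M * R ^ n := by
    rw [hq, Qp_eval_eq n P h hw0, norm_mul, norm_pow, Complex.norm_conj]
    have h1 : ‖(conj w)⁻¹‖ ≤ 1 := by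
      rw [norm_inv, Complex.norm_conj, habs]
      rw [inv_le_one₀ hRpos]; exact le_of_lt hR
    calc ‖w‖ ^ n * ‖P.eval ((conj w)⁻¹)‖
        ≤ ‖w‖ ^ n * M := by
          exact mul_le_mul_of_nonneg_left (ball_le P h1) (by positivity)
      _ = M * R ^ n := by rw [habs]; ring
  -- step for each t > 1
  have key : ∀ t : ℝ, 1 < t →
      ‖P.eval w‖ + ‖q‖ ≤ t * (M * (R ^ n + 1)) := by
    intro t ht
    have htpos : (0:ℝ) < t := lt_trans one_pos ht
    set e : ℂ := if q = 0 then 1 else q / (‖q‖ : ℂ) with he_def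
    have he : ‖e‖ = 1 := by
      by_cases h0 : q = 0
      · simp [he_def, h0]
      · simp only [he_def, if_neg h0, norm_div, Complex.norm_real, Real.norm_eq_abs,
          abs_of_nonneg (norm_nonneg q)]
        rw [div_self (norm_ne_zero_iff.mpr h0)]
    have hqe : q = (‖q‖ : ℂ) * e := by
      by_cases h0 : q = 0
      · simp [h0]
      · rw [he_def, if_neg h0, mul_div_assoc']
        rw [mul_comm, mul_div_assoc, div_self (Complex.ofReal_ne_zero.mpr (norm_ne_zero_iff.mpr h0)), mul_one]
    have he0 : e ≠ 0 := by
      intro h0; rw [h0] at he; simp at he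
    set lam : ℂ := conj ((t:ℂ) * e * (R:ℂ) ^ n / w ^ n) with hlam
    have hwn : ‖w ^ n‖ = R ^ n := by rw [norm_pow, habs]
    have hwn0 : w ^ n ≠ 0 := pow_ne_zero n hw0
    have hlam_abs : ‖lam‖ = t := by
      rw [hlam, Complex.norm_conj, norm_div, norm_mul, norm_mul, Complex.norm_real,
        norm_pow, Complex.norm_real, he, hwn, Real.norm_eq_abs, Real.norm_eq_abs, abs_of_pos htpos, abs_of_pos hRpos]
      field_simp
    set F : Polynomial ℂ := P - Polynomial.C (lam * (M:ℂ)) with hF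
    have hFdeg : F.natDegree ≤ n := by
      refine le_trans (Polynomial.natDegree_sub_le _ _) (max_le h ?_)
      exact (Polynomial.natDegree_C _).le.trans (Nat.zero_le n)
    have hFne : ∀ z : ℂ, ‖z‖ ≤ 1 → F.eval z ≠ 0 := by
      intro z hz1
      rw [hF]
      simp only [Polynomial.eval_sub, Polynomial.eval_C]
      intro hcontra
      have h1 : ‖P.eval z‖ ≤ M := ball_le P hz1
      have h2 : ‖lam * (M:ℂ)‖ = t * M := by
        rw [norm_mul, hlam_abs, Complex.norm_real, Real.norm_eq_abs, abs_of_pos hM]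
      have h3 : P.eval z = lam * (M:ℂ) := by
        have := sub_eq_zero.mp hcontra; exact this
      rw [h3, h2] at h1
      nlinarith
    -- Qp of F at w
    have hQF : (Qp n F).eval w = q - conj (lam * (M:ℂ)) * w ^ n := by
      rw [Qp_eval, hq, Qp_eval]
      have : ∀ i ∈ Finset.range (n+1),
          conj (F.coeff i) * w ^ (n - i)
            = conj (P.coeff i) * w ^ (n - i)
              - (if i = 0 then conj (lam * (M:ℂ)) * w ^ n else 0) := by
        intro i hi
        rw [hF, Polynomial.coeff_sub, Polynomial.coeff_C]
        by_cases h0 : i = 0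
        · subst h0; simp [sub_mul]
        · simp [h0]
      rw [Finset.sum_congr rfl this, Finset.sum_sub_distrib,
        Finset.sum_ite_eq' (Finset.range (n+1)) 0]
      simp
    have hconjlam : conj (lam * (M:ℂ)) * w ^ n = (t:ℂ) * (M:ℂ) * (R:ℂ) ^ n * e := by
      rw [map_mul, hlam, Complex.conj_conj, Complex.conj_ofReal]
      field_simp
    have habs_rhs : ‖(Qp n F).eval w‖ = t * M * R ^ n - ‖q‖ := by
      rw [hQF, hconjlam]
      nth_rewrite 1 [hqe]
      have : (‖q‖ : ℂ) * e - (t:ℂ) * (M:ℂ) * (R:ℂ) ^ n * e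
          = ((‖q‖ : ℂ) - (t:ℂ) * (M:ℂ) * (R:ℂ) ^ n) * e := by ring
      rw [this, norm_mul, he, mul_one]
      have hle : ‖q‖ ≤ t * M * R ^ n := by
        calc ‖q‖ ≤ M * R ^ n := hqb
          _ ≤ t * M * R ^ n := by nlinarith [mul_pos hM (pow_pos hRpos n)]
      rw [show (‖q‖ : ℂ) - (t:ℂ) * (M:ℂ) * (R:ℂ) ^ n
          = ((‖q‖ - t * M * R ^ n : ℝ) : ℂ) by push_cast; ring]
      rw [Complex.norm_real, Real.norm_eq_abs, abs_of_nonpos (by linarith)]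
      ring
    have hmm := maxmod_outer n F hFdeg hFne (w := w) (by rw [habs]; linarith)
    have hlhs : ‖P.eval w‖ - t * M ≤ ‖F.eval w‖ := by
      rw [hF]
      simp only [Polynomial.eval_sub, Polynomial.eval_C]
      have := norm_sub_norm_le (P.eval w) (lam * (M:ℂ))
      rw [norm_mul, hlam_abs, Complex.norm_real, Real.norm_eq_abs, abs_of_pos hM] at this
      linarith [this]
    rw [habs_rhs] at hmm
    nlinarith [hlhs, hmm]
  -- limit t → 1⁺
  have htend : Tendsto (fun t : ℝ => t * (M * (R ^ n + 1)))
      (nhdsWithin (1:ℝ) (Set.Ioi (1:ℝ))) (nhds (1 * (M * (R ^ n + 1)))) := by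
    apply Tendsto.mono_left _ nhdsWithin_le_nhds
    exact (continuous_id.mul continuous_const).tendsto (1:ℝ)
  have hev : ∀ᶠ (t : ℝ) in nhdsWithin (1:ℝ) (Set.Ioi (1:ℝ)),
      ‖P.eval w‖ + ‖q‖ ≤ t * (M * (R ^ n + 1)) := by
    filter_upwards [self_mem_nhdsWithin] with t ht using key t ht
  have := ge_of_tendsto htend hev
  linarith [this]


lemma maxSphere_pos {P : Polynomial ℂ} (hP0 : P ≠ 0) : 0 < maxSphere P := by
  rcases (maxSphere_nonneg P).eq_or_lt with hM | hM
  · exfalso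
    apply hP0
    apply Polynomial.eq_zero_of_infinite_isRoot
    refine Set.infinite_of_injective_forall_mem (f := fun k : ℕ => ((k:ℂ) + 2)⁻¹) ?_ ?_
    · intro a b hab
      simp only [inv_inj] at hab
      have : ((a:ℂ)) = b := by linear_combination hab
      exact_mod_cast this
    · intro k
      have hk : ‖(k:ℂ) + 2‖ = (k:ℝ) + 2 := by
        rw [show ((k:ℂ) + 2) = (((k:ℝ) + 2 : ℝ) : ℂ) by push_cast; ring]
        rw [Complex.norm_real, Real.norm_eq_abs, abs_of_pos (by positivity)]
      have hle : ‖((k:ℂ) + 2)⁻¹‖ ≤ 1 := by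
        rw [norm_inv, hk]
        rw [inv_le_one₀ (by positivity)]
        have : (0:ℝ) ≤ (k:ℝ) := Nat.cast_nonneg k
        linarith
      have := ball_le P hle
      rw [← hM] at this
      have h0 : ‖P.eval (((k:ℂ) + 2)⁻¹)‖ = 0 :=
        le_antisymm this (norm_nonneg _)
      exact norm_eq_zero.mp h0
  · exact hM

theorem stmt_3 (n : ℕ) (P : Polynomial ℂ) (hP : P.natDegree = n)
    (hz : ∀ z : ℂ, ‖z‖ < 1 → P.eval z ≠ 0) (R : ℝ) (hR : 1 < R) :
    ∀ z : ℂ, ‖z‖ = 1 →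
      ‖P.eval (R * z)‖ ≤ (R ^ n + 1) / 2 * maxSphere P := by
  intro z hz1
  by_cases hP0 : P = 0
  · rw [hP0]
    simp only [Polynomial.eval_zero, norm_zero]
    have h1 : (0:ℝ) ≤ (R ^ n + 1) / 2 := by positivity
    exact mul_nonneg h1 (maxSphere_nonneg 0)
  · have hM : 0 < maxSphere P := maxSphere_pos hP0
    have hdeg : P.natDegree ≤ n := le_of_eq hP
    have hRpos : (0:ℝ) < R := lt_trans one_pos hR
    have habs : ‖(R:ℂ) * z‖ = R := by
      rw [norm_mul, Complex.norm_real, Real.norm_eq_abs, abs_of_pos hRpos, hz1, mul_one]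
    have h2 := sum_key n P hdeg hM habs hR
    have h3 := P_le_Q n P hdeg hz (w := (R:ℂ) * z) (by rw [habs]; exact le_of_lt hR)
    linarith
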